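/- In an e-ring, if d,e,f ∈ E and ef = fe, then 0 ≤ ef ≤ e, 0 ≤ ede ≤ e² ≤ e ≤ 1, e,f ≤ e+f−ef ≤ 1, and 0 ≤ e−e² ≤ e, 1−e. -/
import Mathlib


/-- An e-ring: an associative unital ring `R` together with a set `E` of effects.
`E⁺` is the additive submonoid generated by `E` (the set of finite sums of effects). -/
structure ERing (R : Type*) [Ring R] where
  E : Set R
  zero_mem : (0:R) ∈ E
  one_mem : (1:R) ∈ E
  compl_mem : ∀ e ∈ E, 1 - e ∈ E
  ax_i : ∀ a ∈ AddSubmonoid.closure E, -a ∈ AddSubmonoid.closure E → a = 0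
  ax_ii : ∀ a ∈ AddSubmonoid.closure E, 1 - a ∈ AddSubmonoid.closure E → a ∈ E
  ax_iii : ∀ a ∈ AddSubmonoid.closure E, ∀ b ∈ AddSubmonoid.closure E,
    a * b = b * a → a * b ∈ AddSubmonoid.closure E
  ax_iv : ∀ a ∈ AddSubmonoid.closure E, ∀ b ∈ AddSubmonoid.closure E,
    a * b * a ∈ AddSubmonoid.closure E
  ax_v : ∀ a ∈ AddSubmonoid.closure E, ∀ b ∈ AddSubmonoid.closure E,
    a * b * a = 0 → a * b = 0 ∧ b * a = 0
  ax_vi : ∀ a ∈ AddSubmonoid.closure E, ∀ b ∈ AddSubmonoid.closure E,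
    (a - b) * (a - b) ∈ AddSubmonoid.closure E

namespace ERing

variable {R : Type*} [Ring R]

/-- The positive cone `E⁺`: all finite sums of effects. -/
def Ep (S : ERing R) : Set R := (AddSubmonoid.closure S.E : Set R)

/-- The directed group `G = E⁺ − E⁺` (as a subset of `R`). -/
def G (S : ERing R) : Set R := {x | ∃ a ∈ S.Ep, ∃ b ∈ S.Ep, x = a - b}

/-- The partial order with positive cone `E⁺`: `g ≤ h` iff `h − g ∈ E⁺`. -/
def le (S : ERing R) (g h : R) : Prop := h - g ∈ S.Ep

/-- The set of projections: idempotent elements of `G`. -/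
def P (S : ERing R) : Set R := {p | p ∈ S.G ∧ p * p = p}

end ERing

theorem stmt4 {R : Type*} [Ring R] (S : ERing R) :
    ∀ d ∈ S.E, ∀ e ∈ S.E, ∀ f ∈ S.E, e * f = f * e →
      S.le 0 (e * f) ∧ S.le (e * f) e ∧
      S.le 0 (e * d * e) ∧ S.le (e * d * e) (e * e) ∧ S.le (e * e) e ∧ S.le e 1 ∧
      S.le e (e + f - e * f) ∧ S.le f (e + f - e * f) ∧ S.le (e + f - e * f) 1 ∧
      S.le 0 (e - e * e) ∧ S.le (e - e * e) e ∧ S.le (e - e * e) (1 - e) := by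
  intro d hd e he f hf hcomm
  have hdC : d ∈ AddSubmonoid.closure S.E := AddSubmonoid.subset_closure hd
  have heC : e ∈ AddSubmonoid.closure S.E := AddSubmonoid.subset_closure he
  have hfC : f ∈ AddSubmonoid.closure S.E := AddSubmonoid.subset_closure hf
  have heC' : (1 - e) ∈ AddSubmonoid.closure S.E :=
    AddSubmonoid.subset_closure (S.compl_mem e he)
  have hfC' : (1 - f) ∈ AddSubmonoid.closure S.E :=
    AddSubmonoid.subset_closure (S.compl_mem f hf)
  have hdC' : (1 - d) ∈ AddSubmonoid.closure S.E :=
    AddSubmonoid.subset_closure (S.compl_mem d hd)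
  have h1 : e * f ∈ AddSubmonoid.closure S.E := S.ax_iii e heC f hfC hcomm
  have h2 : e * (1 - f) ∈ AddSubmonoid.closure S.E := by
    refine S.ax_iii e heC _ hfC' ?_
    simp only [mul_sub, sub_mul, mul_one, one_mul, hcomm]
  have h3 : (1 - e) * f ∈ AddSubmonoid.closure S.E := by
    refine S.ax_iii _ heC' f hfC ?_
    simp only [mul_sub, sub_mul, mul_one, one_mul, hcomm]
  have h4 : (1 - e) * (1 - f) ∈ AddSubmonoid.closure S.E := by
    refine S.ax_iii _ heC' _ hfC' ?_
    simp only [mul_sub, sub_mul, mul_one, one_mul, hcomm]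
    abel
  have h5 : e * e ∈ AddSubmonoid.closure S.E := S.ax_iii e heC e heC rfl
  have h6 : e * (1 - e) ∈ AddSubmonoid.closure S.E := by
    refine S.ax_iii e heC _ heC' ?_; noncomm_ring
  have h7 : (1 - e) * (1 - e) ∈ AddSubmonoid.closure S.E :=
    S.ax_iii _ heC' _ heC' rfl
  have h8 : e * d * e ∈ AddSubmonoid.closure S.E := S.ax_iv e heC d hdC
  have h9 : e * (1 - d) * e ∈ AddSubmonoid.closure S.E := S.ax_iv e heC _ hdC'
  refine ⟨?_, ?_, ?_, ?_, ?_, ?_, ?_, ?_, ?_, ?_, ?_, ?_⟩ <;>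
    simp only [ERing.le, ERing.Ep, SetLike.mem_coe]
  · simpa using h1
  · have : e - e * f = e * (1 - f) := by noncomm_ring
    rw [this]; exact h2
  · simpa using h8
  · have : e * e - e * d * e = e * (1 - d) * e := by noncomm_ring
    rw [this]; exact h9
  · have : e - e * e = e * (1 - e) := by noncomm_ring
    rw [this]; exact h6
  · exact heC'
  · have : e + f - e * f - e = (1 - e) * f := by noncomm_ring
    rw [this]; exact h3
  · have : e + f - e * f - f = e * (1 - f) := by noncomm_ring
    rw [this]; exact h2
  · have : 1 - (e + f - e * f) = (1 - e) * (1 - f) := by noncomm_ring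
    rw [this]; exact h4
  · have : e - e * e - 0 = e * (1 - e) := by noncomm_ring
    rw [this]; exact h6
  · have : e - (e - e * e) = e * e := by noncomm_ring
    rw [this]; exact h5
  · have : 1 - e - (e - e * e) = (1 - e) * (1 - e) := by noncomm_ring
    rw [this]; exact h7
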